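/- Let y0 ≥ 1 and let (X,Y,Z) : [η0,η1] → ℝ³ be a solution of the system (S) with X(η) ≥ 0 and Z(η) ≥ 0 for all η ∈ [η0,η1]. If Y(η0) < y0, then Y(η) < y0 for every η ∈ [η0,η1]; indeed, at any point where Y = y0, X ≥ 0, Z ≥ 0 one has Y' = −y0² − (β/α)y0 + X(1−y0) − Z < 0. -/

import Mathlib

open Real Set Filter Topology

/-- The self-similar exponent `α = (σ+2)/((σ-2)(m-1))`. -/
noncomputable def ssAlpha (m σ : ℝ) : ℝ := (σ + 2) / ((σ - 2) * (m - 1))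

/-- The self-similar exponent `β = 2/(σ-2)`. -/
noncomputable def ssBeta (σ : ℝ) : ℝ := 2 / (σ - 2)

/-- `(X,Y,Z)` satisfies the quadratic system (S) at time `η`:
`X' = X((m−1)Y − 2X)`, `Y' = −Y² − (β/α)Y + X − XY − Z`, `Z' = (σ−2)XZ`. -/
def SysAt (m σ : ℝ) (X Y Z : ℝ → ℝ) (η : ℝ) : Prop :=
  HasDerivAt X (X η * ((m - 1) * Y η - 2 * X η)) η ∧
  HasDerivAt Y (-(Y η) ^ 2 - ssBeta σ / ssAlpha m σ * Y η + X η - X η * Y η - Z η) η ∧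
  HasDerivAt Z ((σ - 2) * X η * Z η) η

/-- The equilibrium `P0^λ = (0, λ, −λ² − (β/α)λ)` on the critical parabola. -/
noncomputable def P0pt (m σ l : ℝ) : ℝ × ℝ × ℝ :=
  (0, l, -l ^ 2 - ssBeta σ / ssAlpha m σ * l)

/-- The equilibrium `P2 = ((m−1)/(2(m+1)α), 1/((m+1)α), 0)`. -/
noncomputable def P2pt (m σ : ℝ) : ℝ × ℝ × ℝ :=
  ((m - 1) / (2 * (m + 1) * ssAlpha m σ), 1 / ((m + 1) * ssAlpha m σ), 0)

/-- for `y0 ≥ 1` the half-space `{Y < y0}` is forward invariant in the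
region `{X ≥ 0, Z ≥ 0}`; indeed at any point with `Y = y0`, `X ≥ 0`, `Z ≥ 0` one has
`Y' = −y0² − (β/α)y0 + X(1−y0) − Z < 0`. -/
theorem Y_lt_y0_invariant
    (m σ : ℝ) (hm1 : 1 < m) (hm2 : m < 2) (hσ : 2 < σ)
    (y0 : ℝ) (hy0 : 1 ≤ y0)
    (η0 η1 : ℝ) (hη : η0 ≤ η1) (X Y Z : ℝ → ℝ)
    (hsol : ∀ η ∈ Icc η0 η1,
      HasDerivWithinAt X (X η * ((m - 1) * Y η - 2 * X η)) (Icc η0 η1) η ∧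
      HasDerivWithinAt Y
        (-(Y η) ^ 2 - ssBeta σ / ssAlpha m σ * Y η + X η - X η * Y η - Z η)
        (Icc η0 η1) η ∧
      HasDerivWithinAt Z ((σ - 2) * X η * Z η) (Icc η0 η1) η)
    (hX : ∀ η ∈ Icc η0 η1, 0 ≤ X η)
    (hZ : ∀ η ∈ Icc η0 η1, 0 ≤ Z η)
    (hY0 : Y η0 < y0) :
    (∀ η ∈ Icc η0 η1, Y η < y0) ∧
    ∀ x z : ℝ, 0 ≤ x → 0 ≤ z →
      -y0 ^ 2 - ssBeta σ / ssAlpha m σ * y0 + x * (1 - y0) - z < 0 := by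
  have hc : 0 ≤ ssBeta σ / ssAlpha m σ := by
    unfold ssBeta ssAlpha
    apply div_nonneg
    · apply div_nonneg (by norm_num) (by linarith)
    · apply div_nonneg (by linarith) (by nlinarith)
  have key : ∀ y x z : ℝ, 1 ≤ y → 0 ≤ x → 0 ≤ z →
      -y ^ 2 - ssBeta σ / ssAlpha m σ * y + x - x * y - z < 0 := by
    intro y x z hy hx hz
    nlinarith [mul_nonneg hc (le_trans zero_le_one hy),
      mul_nonneg hx (sub_nonneg.2 hy)]
  refine ⟨?_, fun x z hx hz => by nlinarith [key y0 x z hy0 hx hz]⟩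
  by_contra h
  push_neg at h
  obtain ⟨η2, hη2, hY2⟩ := h
  set A := {s | s ∈ Icc η0 η1 ∧ y0 ≤ Y s} with hAdef
  have hYcont : ContinuousOn Y (Icc η0 η1) :=
    fun s hs => ((hsol s hs).2.1).continuousWithinAt
  have hclosed : IsClosed A := by
    have hAeq : A = Icc η0 η1 ∩ Y ⁻¹' Ici y0 := by ext s; simp [hAdef]
    rw [hAeq]
    exact hYcont.preimage_isClosed_of_isClosed isClosed_Icc isClosed_Ici
  have hne : A.Nonempty := ⟨η2, hη2, hY2⟩
  have hbdd : BddBelow A := ⟨η0, fun s hs => hs.1.1⟩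
  set t := sInf A with htdef
  have htA : t ∈ A := hclosed.csInf_mem hne hbdd
  have htIcc : t ∈ Icc η0 η1 := htA.1
  have htY : y0 ≤ Y t := htA.2
  have ht0 : η0 < t := by
    rcases lt_or_eq_of_le htIcc.1 with h' | h'
    · exact h'
    · exfalso; rw [← h'] at htY; linarith
  have hlt : ∀ s ∈ Ico η0 t, Y s < y0 := by
    intro s hs
    by_contra hge
    push_neg at hge
    have hsA : s ∈ A := ⟨⟨hs.1, le_trans hs.2.le htIcc.2⟩, hge⟩
    exact absurd (csInf_le hbdd hsA) (not_le.2 hs.2)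
  obtain ⟨-, hYd, -⟩ := hsol t htIcc
  have hd : (-(Y t) ^ 2 - ssBeta σ / ssAlpha m σ * Y t + X t - X t * Y t - Z t) < 0 :=
    key (Y t) (X t) (Z t) (le_trans hy0 htY) (hX t htIcc) (hZ t htIcc)
  rw [hasDerivWithinAt_iff_tendsto_slope] at hYd
  have hsub : Ico η0 t ⊆ Icc η0 η1 \ {t} := by
    intro s hs
    exact ⟨⟨hs.1, le_trans hs.2.le htIcc.2⟩, ne_of_lt hs.2⟩
  have hten : Tendsto (slope Y t) (𝓝[Ico η0 t] t)
      (𝓝 (-(Y t) ^ 2 - ssBeta σ / ssAlpha m σ * Y t + X t - X t * Y t - Z t)) :=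
    hYd.mono_left (nhdsWithin_mono t hsub)
  have hneBot : (𝓝[Ico η0 t] t).NeBot := by
    rw [nhdsWithin_Ico_eq_nhdsLT ht0]
    infer_instance
  have hev : ∀ᶠ s in 𝓝[Ico η0 t] t, slope Y t s < 0 :=
    hten.eventually_lt_const hd
  obtain ⟨s, hs1, hs2⟩ := (hev.and eventually_mem_nhdsWithin).exists
  rw [slope_def_field] at hs1
  have hst : s - t < 0 := by linarith [hs2.2]
  have hnum : 0 < Y s - Y t := by
    rcases div_neg_iff.mp hs1 with ⟨h1, h2⟩ | ⟨h1, h2⟩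
    · exact h1
    · linarith
  have := hlt s hs2
  linarith
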